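/- Let a_1,…,a_m and b be vectors in ℤ^d. If there exist real numbers λ_1,…,λ_m ≥ 0 such that b = Σ_{i=1}^m λ_i a_i, then there exist a positive integer N and natural numbers m_1,…,m_m such that N·b = Σ_{i=1}^m m_i a_i. -/

import Mathlib

open Finset
open scoped Classical

/-- Sum over all indices equals sum over the support (as a subtype). -/
lemma sum_subtype_support {M : Type*} [AddCommMonoid M] {m : ℕ} (mu : Fin m → ℝ)
    (F : Fin m → M) (hF : ∀ i, mu i = 0 → F i = 0) :
    ∑ i, F i = ∑ j : {i : Fin m // mu i ≠ 0}, F j.1 := by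
  rw [show (∑ i, F i) = ∑ i ∈ univ.filter (fun i => mu i ≠ 0), F i from
    (Finset.sum_subset (filter_subset _ _) (fun x _ hx => hF x (by simp only [mem_filter, mem_univ, true_and, not_not] at hx; exact hx))).symm]
  exact (Finset.sum_subtype (p := fun i => mu i ≠ 0) (univ.filter (fun i => mu i ≠ 0)) (by simp) F)

/-- Carathéodory-type reduction for cones. -/
lemma cone_caratheodory {d m : ℕ} (v : Fin m → Fin d → ℝ) (b : Fin d → ℝ) :
    ∀ (n : ℕ) (lam : Fin m → ℝ), (univ.filter fun i => lam i ≠ 0).card ≤ n →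
      (∀ i, 0 ≤ lam i) → b = ∑ i, lam i • v i →
      ∃ mu : Fin m → ℝ, (∀ i, 0 ≤ mu i) ∧ b = ∑ i, mu i • v i ∧
        LinearIndependent ℝ (fun j : {i : Fin m // mu i ≠ 0} => v j.1) := by
  intro n
  induction n with
  | zero =>
    intro lam hcard hpos hsum
    refine ⟨lam, hpos, hsum, ?_⟩
    have : ∀ i, lam i = 0 := by
      intro i
      by_contra hi
      have : i ∈ univ.filter (fun i => lam i ≠ 0) := by simp [hi]
      have := Finset.card_pos.2 ⟨i, this⟩
      omega
    haveI : IsEmpty {i : Fin m // lam i ≠ 0} := ⟨fun j => j.2 (this j.1)⟩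
    exact linearIndependent_empty_type
  | succ n ih =>
    intro lam hcard hpos hsum
    by_cases hli : LinearIndependent ℝ (fun j : {i : Fin m // lam i ≠ 0} => v j.1)
    · exact ⟨lam, hpos, hsum, hli⟩
    · -- get a nontrivial relation on the support
      obtain ⟨g, hgrel, j₁, hgj₁⟩ := Fintype.not_linearIndependent_iff.1 hli
      -- extend to Fin m
      set cc : Fin m → ℝ := fun i => if h : lam i ≠ 0 then g ⟨i, h⟩ else 0 with hcc
      have hccrel : ∑ i, cc i • v i = 0 := by
        rw [sum_subtype_support lam (fun i => cc i • v i)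
          (fun i hi => by simp [hcc, hi])]
        rw [← hgrel]
        apply Finset.sum_congr rfl
        intro j _
        simp [hcc, j.2]
      have hccoff : ∀ i, lam i = 0 → cc i = 0 := fun i hi => by simp [hcc, hi]
      have hccne : cc j₁.1 ≠ 0 := by simpa [hcc, j₁.2] using hgj₁
      -- WLOG some coordinate is positive
      obtain ⟨c, hcrel, hcoff, j₀, hj₀⟩ :
          ∃ c : Fin m → ℝ, (∑ i, c i • v i = 0) ∧ (∀ i, lam i = 0 → c i = 0) ∧
            ∃ j, 0 < c j := by
        rcases lt_or_gt_of_ne hccne with hneg | hpos'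
        · refine ⟨-cc, ?_, fun i hi => by simp [hccoff i hi], j₁.1, by simpa using hneg⟩
          simp only [Pi.neg_apply, neg_smul, Finset.sum_neg_distrib, hccrel, neg_zero]
        · exact ⟨cc, hccrel, hccoff, j₁.1, hpos'⟩
      -- minimize the ratio
      have hTne : (univ.filter fun i => 0 < c i).Nonempty := ⟨j₀, by simp [hj₀]⟩
      obtain ⟨i₀, hi₀T, hmin⟩ := Finset.exists_min_image _ (fun i => lam i / c i) hTne
      have hci₀ : 0 < c i₀ := by simpa using hi₀T
      set t : ℝ := lam i₀ / c i₀ with ht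
      have ht0 : 0 ≤ t := div_nonneg (hpos i₀) hci₀.le
      set lam' : Fin m → ℝ := fun i => lam i - t * c i with hlam'
      have hpos' : ∀ i, 0 ≤ lam' i := by
        intro i
        rcases le_or_gt (c i) 0 with hc | hc
        · have : t * c i ≤ 0 := mul_nonpos_of_nonneg_of_nonpos ht0 hc
          simp only [hlam']
          linarith [hpos i]
        · have := hmin i (by simp [hc])
          have : t * c i ≤ lam i := by
            rw [ht] at *
            calc lam i₀ / c i₀ * c i ≤ lam i / c i * c i := by
                  apply mul_le_mul_of_nonneg_right this hc.le
              _ = lam i := div_mul_cancel₀ _ hc.ne'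
          simp only [hlam']; linarith
      have hsupp : ∀ i, lam' i ≠ 0 → lam i ≠ 0 := by
        intro i hi hli0
        exact hi (by simp [hlam', hcoff i hli0, hli0])
      have hlam'i₀ : lam' i₀ = 0 := by
        simp only [hlam', ht]
        field_simp
        ring
      have hi₀mem : i₀ ∈ univ.filter (fun i => lam i ≠ 0) := by
        simp only [mem_filter, mem_univ, true_and]
        intro h0
        exact hci₀.ne' (hcoff i₀ h0)
      have hcard' : (univ.filter fun i => lam' i ≠ 0).card ≤ n := by
        have hsub : (univ.filter fun i => lam' i ≠ 0) ⊆
            (univ.filter fun i => lam i ≠ 0).erase i₀ := by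
          intro x hx
          simp only [mem_filter, mem_univ, true_and] at hx
          rw [Finset.mem_erase]
          refine ⟨fun hxe => hx (hxe ▸ hlam'i₀), by simp [hsupp x hx]⟩
        have h1 := Finset.card_le_card hsub
        have h2 := Finset.card_erase_of_mem hi₀mem
        have h3 := Finset.card_pos.2 ⟨i₀, hi₀mem⟩
        omega
      have hsum' : b = ∑ i, lam' i • v i := by
        have : ∑ i, lam' i • v i = (∑ i, lam i • v i) - t • ∑ i, c i • v i := by
          rw [Finset.smul_sum, ← Finset.sum_sub_distrib]
          apply Finset.sum_congr rfl
          intro i _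
          simp [hlam', sub_smul, smul_smul]
        rw [this, hcrel, smul_zero, sub_zero]; exact hsum
      exact ih lam' hcard' hpos' hsum'

/-- If a rational vector is a real combination of rational vectors,
it is a rational combination of them. -/
lemma rat_solution {d : ℕ} {ι : Type*} [Fintype ι] (v : ι → Fin d → ℚ) (β : Fin d → ℚ)
    (mu : ι → ℝ)
    (h : ∀ k, (β k : ℝ) = ∑ i, mu i * (v i k : ℝ)) :
    ∃ q : ι → ℚ, ∀ k, β k = ∑ i, q i * v i k := by
  by_contra hq
  push_neg at hq
  have hβ : β ∉ Submodule.span ℚ (Set.range v) := by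
    intro hmem
    obtain ⟨cfun, hc⟩ := (Submodule.mem_span_range_iff_exists_fun ℚ).1 hmem
    obtain ⟨k, hk⟩ := hq cfun
    apply hk
    rw [← hc]
    simp [Finset.sum_apply]
  obtain ⟨f, hf0, hfmap⟩ :=
    Submodule.exists_dual_map_eq_bot_of_notMem hβ inferInstance
  have hfspan : ∀ x ∈ Submodule.span ℚ (Set.range v), f x = 0 := by
    intro x hx
    have : f x ∈ (Submodule.span ℚ (Set.range v)).map f := ⟨x, hx, rfl⟩
    rwa [hfmap, Submodule.mem_bot] at this
  -- the rational functional as a dot product with y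
  set y : Fin d → ℚ := fun k => f (Pi.single k 1) with hy
  have hdot : ∀ w : Fin d → ℚ, f w = ∑ k, w k * y k := by
    intro w
    have hw : w = ∑ k, Pi.single k (w k) := (Finset.univ_sum_single w).symm
    calc f w = f (∑ k, Pi.single k (w k)) := by rw [← hw]
      _ = ∑ k, f (Pi.single k (w k)) := map_sum f _ _
      _ = ∑ k, w k * y k := by
          apply Finset.sum_congr rfl; intro k _
          have hsk : Pi.single k (w k) = w k • (Pi.single k 1 : Fin d → ℚ) := by
            funext j
            rcases eq_or_ne j k with rfl | hj
            · simp
            · simp [Pi.single_eq_of_ne hj]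
          rw [hsk, map_smul, smul_eq_mul, hy]
  -- the corresponding real computation
  have hzero : ∀ i, (∑ k, (v i k : ℝ) * (y k : ℝ)) = 0 := by
    intro i
    have := hfspan (v i) (Submodule.subset_span ⟨i, rfl⟩)
    rw [hdot] at this
    have h2 : ((∑ k, v i k * y k : ℚ) : ℝ) = 0 := by rw [this]; simp
    push_cast at h2
    exact h2
  have hone : (∑ k, (β k : ℝ) * (y k : ℝ)) = ((f β : ℚ) : ℝ) := by
    rw [hdot]
    push_cast
    rfl
  have : (∑ k, (β k : ℝ) * (y k : ℝ)) = 0 := by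
    calc ∑ k, (β k : ℝ) * (y k : ℝ)
        = ∑ k, (∑ i, mu i * (v i k : ℝ)) * (y k : ℝ) := by
          apply Finset.sum_congr rfl; intro k _; rw [h k]
      _ = ∑ k, ∑ i, mu i * ((v i k : ℝ) * (y k : ℝ)) := by
          apply Finset.sum_congr rfl; intro k _
          rw [Finset.sum_mul]
          apply Finset.sum_congr rfl; intro i _; ring
      _ = ∑ i, ∑ k, mu i * ((v i k : ℝ) * (y k : ℝ)) := Finset.sum_comm
      _ = ∑ i, mu i * ∑ k, (v i k : ℝ) * (y k : ℝ) := by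
          apply Finset.sum_congr rfl; intro i _; rw [Finset.mul_sum]
      _ = 0 := by simp [hzero]
  rw [hone] at this
  exact hf0 (by exact_mod_cast this)

theorem stmt_9 {d m : ℕ} (a : Fin m → Fin d → ℤ) (b : Fin d → ℤ)
    (h : ∃ lam : Fin m → ℝ, (∀ i, 0 ≤ lam i) ∧
      ∀ k, (b k : ℝ) = ∑ i, lam i * (a i k : ℝ)) :
    ∃ N : ℕ, 0 < N ∧ ∃ c : Fin m → ℕ,
      ∀ k, (N : ℤ) * b k = ∑ i, (c i : ℤ) * a i k := by
  obtain ⟨lam, hpos, hsum⟩ := h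
  set v : Fin m → Fin d → ℝ := fun i k => (a i k : ℝ) with hv
  set α : Fin m → Fin d → ℚ := fun i k => (a i k : ℚ) with hα
  set β : Fin d → ℚ := fun k => (b k : ℚ) with hβ
  have hb : (fun k => (b k : ℝ)) = ∑ i, lam i • v i := by
    funext k
    simp only [Finset.sum_apply, Pi.smul_apply, smul_eq_mul]
    exact hsum k
  obtain ⟨mu, hmupos, hmusum, hmuli⟩ := cone_caratheodory v (fun k => (b k : ℝ)) m lam
    (le_trans (Finset.card_filter_le _ _) (by simp)) hpos hb
  -- restrict the sum to the support of mu
  have hsum2 : ∀ k, ((β k : ℝ)) = ∑ j : {i : Fin m // mu i ≠ 0}, mu j.1 * ((α j.1 k : ℝ)) := by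
    intro k
    have hk := congrFun hmusum k
    simp only [Finset.sum_apply, Pi.smul_apply, smul_eq_mul] at hk
    rw [sum_subtype_support mu (fun i => mu i * v i k) (fun i hi => by simp [hi])] at hk
    have : ∀ j : {i : Fin m // mu i ≠ 0}, mu j.1 * ((α j.1 k : ℝ)) = mu j.1 * v j.1 k := by
      intro j; simp [hα, hv]
    rw [Finset.sum_congr rfl (fun j _ => this j)]
    simp only [hβ]
    push_cast
    exact hk
  obtain ⟨q, hq⟩ := rat_solution (fun j : {i : Fin m // mu i ≠ 0} => α j.1) β
    (fun j => mu j.1) hsum2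
  -- uniqueness of coefficients: q j = mu j
  have hqmu : ∀ j : {i : Fin m // mu i ≠ 0}, ((q j : ℝ)) = mu j.1 := by
    have hdiff : ∑ j : {i : Fin m // mu i ≠ 0}, ((q j : ℝ) - mu j.1) • v j.1 = 0 := by
      funext k
      simp only [Finset.sum_apply, Pi.smul_apply, smul_eq_mul, Pi.zero_apply]
      have h1 : ∑ j : {i : Fin m // mu i ≠ 0}, ((q j : ℝ)) * v j.1 k = (β k : ℝ) := by
        have h2 := congrArg (fun x : ℚ => (x : ℝ)) (hq k)
        simp only [hα, hβ, hv] at h2 ⊢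
        push_cast at h2 ⊢
        exact h2.symm
      rw [Finset.sum_congr rfl (fun j (_ : j ∈ Finset.univ) => by ring :
        ∀ j ∈ Finset.univ, ((q j : ℝ) - mu j.1) * v j.1 k
          = (q j : ℝ) * v j.1 k - mu j.1 * v j.1 k)]
      rw [Finset.sum_sub_distrib, h1]
      have h4 : ∑ j : {i : Fin m // mu i ≠ 0}, mu j.1 * v j.1 k = (β k : ℝ) := by
        have h3 := hsum2 k
        simp only [hα, hβ, hv] at h3 ⊢
        push_cast at h3 ⊢
        exact h3.symm
      rw [h4, sub_self]
    intro j
    have := Fintype.linearIndependent_iff.1 hmuli (fun j => (q j : ℝ) - mu j.1) hdiff j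
    linarith [this]
  have hqpos : ∀ j, 0 ≤ q j := by
    intro j
    have := hqmu j
    have h0 : (0 : ℝ) ≤ (q j : ℝ) := this ▸ hmupos j.1
    exact_mod_cast h0
  -- clear denominators
  set N : ℕ := ∏ j : {i : Fin m // mu i ≠ 0}, (q j).den with hN
  have hNpos : 0 < N := Finset.prod_pos fun j _ => (q j).pos
  set c' : {i : Fin m // mu i ≠ 0} → ℕ := fun j => (q j).num.toNat * (N / (q j).den) with hc'
  have hc'cast : ∀ j, ((c' j : ℚ)) = (N : ℚ) * q j := by
    intro j
    have hdvd : (q j).den ∣ N := Finset.dvd_prod_of_mem _ (Finset.mem_univ j)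
    have hdenne : ((q j).den : ℚ) ≠ 0 := by exact_mod_cast (q j).pos.ne'
    have hnum : (0 : ℤ) ≤ (q j).num := Rat.num_nonneg.2 (hqpos j)
    calc ((c' j : ℚ)) = ((q j).num.toNat : ℚ) * ((N / (q j).den : ℕ) : ℚ) := by
          rw [hc']; push_cast [Nat.cast_mul]; ring
      _ = ((q j).num : ℚ) * ((N : ℚ) / ((q j).den : ℚ)) := by
          rw [Nat.cast_div hdvd hdenne]
          congr 1
          exact_mod_cast congrArg (Int.cast : ℤ → ℚ) (Int.toNat_of_nonneg hnum)
      _ = (N : ℚ) * (((q j).num : ℚ) / ((q j).den : ℚ)) := by ring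
      _ = (N : ℚ) * q j := by rw [Rat.num_div_den]
  set C : Fin m → ℕ := fun i => if h : mu i ≠ 0 then c' ⟨i, h⟩ else 0 with hC
  refine ⟨N, hNpos, C, ?_⟩
  intro k
  have key : ((N : ℚ)) * β k = ∑ i, (C i : ℚ) * α i k := by
    rw [sum_subtype_support mu (fun i => (C i : ℚ) * α i k)
      (fun i hi => by simp [hC, hi])]
    have : ∀ j : {i : Fin m // mu i ≠ 0}, (C j.1 : ℚ) * α j.1 k = (N : ℚ) * (q j * α j.1 k) := by
      intro j
      rw [hC]
      simp only [dif_pos j.2]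
      rw [hc'cast j]
      ring
    rw [Finset.sum_congr rfl (fun j _ => this j), ← Finset.mul_sum, ← hq k]
  have keyZ : (((N : ℤ) * b k : ℤ) : ℚ) = ((∑ i, (C i : ℤ) * a i k : ℤ) : ℚ) := by
    simp only [hβ, hα] at key
    push_cast at key ⊢
    exact key
  exact_mod_cast keyZ
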